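/- Let q be a prime power with q ≠ 2, n ≥ 1, and let A_1, …, A_m and B_1, …, B_m be affine subspaces of the n-dimensional affine space F_q^n. Assume the pair of families {(A_i, B_i) : 1 ≤ i ≤ m} is cross-intersecting, i.e., A_i ∩ B_i = ∅ for each 1 ≤ i ≤ m and A_i ∩ B_j ≠ ∅ whenever 1 ≤ i < j ≤ m. Then m ≤ q^n + 1. -/

import Mathlib

open Pointwise

/-- Separation of two disjoint affine subspaces by an affine functional, given in
coordinates: there is a vector `w` and constant `c` with `⟨w,x⟩ = c + 1` on `v +ᵥ V`
and `⟨w,x⟩ = c` on `u +ᵥ U`. -/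
private lemma hegedus_sep {F : Type*} [Field F] {n : ℕ}
    (v u : Fin n → F) (V U : Submodule F (Fin n → F))
    (hd : (v +ᵥ (V : Set (Fin n → F))) ∩ (u +ᵥ (U : Set (Fin n → F))) = ∅) :
    ∃ (w : Fin n → F) (c : F),
      (∀ x ∈ v +ᵥ (V : Set (Fin n → F)), ∑ j, w j * x j = c + 1) ∧
      (∀ x ∈ u +ᵥ (U : Set (Fin n → F)), ∑ j, w j * x j = c) := by
  classical
  have hnm : v - u ∉ V ⊔ U := by
    intro h
    rw [Submodule.mem_sup] at h
    obtain ⟨a, ha, b, hb, hab⟩ := h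
    have hmem : (u + b) ∈ (v +ᵥ (V : Set (Fin n → F))) ∩ (u +ᵥ (U : Set (Fin n → F))) := by
      constructor
      · refine ⟨-a, neg_mem ha, ?_⟩
        have : v + -a = u + b := by
          have : a + b = v - u := hab
          abel_nf
          abel_nf at this
          linear_combination (norm := abel) -this
        simpa [vadd_eq_add] using this
      · exact ⟨b, hb, by simp [vadd_eq_add]⟩
    rw [hd] at hmem
    exact hmem
  obtain ⟨f, hfx, hfmap⟩ := Submodule.exists_dual_map_eq_bot_of_notMem hnm inferInstance
  have hker : ∀ y ∈ V ⊔ U, f y = 0 := by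
    intro y hy
    have : f y ∈ (V ⊔ U).map f := Submodule.mem_map_of_mem hy
    rw [hfmap] at this
    exact (Submodule.mem_bot F).1 this
  set φ : (Fin n → F) →ₗ[F] F := (f (v - u))⁻¹ • f with hφ
  have hφvu : φ (v - u) = 1 := by
    rw [hφ]
    simp only [LinearMap.smul_apply, smul_eq_mul]
    exact inv_mul_cancel₀ hfx
  have hφker : ∀ y ∈ V ⊔ U, φ y = 0 := by
    intro y hy; simp [hφ, hker y hy]
  refine ⟨fun j => φ (fun k => if j = k then 1 else 0), φ u, ?_, ?_⟩
  · intro x hx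
    obtain ⟨a, ha, rfl⟩ := hx
    have hsum : ∑ j, φ (fun k => if j = k then 1 else 0) * (v +ᵥ a) j = φ (v +ᵥ a) := by
      rw [LinearMap.pi_apply_eq_sum_univ φ (v +ᵥ a)]
      exact Finset.sum_congr rfl fun j _ => by rw [smul_eq_mul, mul_comm]
    rw [hsum]
    have h1 : φ (v +ᵥ a) = φ (v - u) + φ u + φ a := by
      rw [show v +ᵥ a = (v - u) + u + a by simp only [vadd_eq_add]; abel, map_add, map_add]
    rw [h1, hφvu, hφker a (Submodule.mem_sup_left ha)]
    ring
  · intro x hx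
    obtain ⟨b, hb, rfl⟩ := hx
    have hsum : ∑ j, φ (fun k => if j = k then 1 else 0) * (u +ᵥ b) j = φ (u +ᵥ b) := by
      rw [LinearMap.pi_apply_eq_sum_univ φ (u +ᵥ b)]
      exact Finset.sum_congr rfl fun j _ => by rw [smul_eq_mul, mul_comm]
    rw [hsum]
    have h1 : φ (u +ᵥ b) = φ u + φ b := by
      rw [← map_add]; congr 1
    rw [h1, hφker b (Submodule.mem_sup_right hb), add_zero]

/-- Hegedűs' theorem (Theorem 1.4): for `q ≠ 2`, a cross-intersecting pair of families of
affine subspaces of `F_q^n` has size `m ≤ qⁿ + 1`. -/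
theorem hegedus_affine_bound
    {F : Type*} [Field F] [Fintype F] (q n m : ℕ)
    (hq : q = Fintype.card F) (hq2 : q ≠ 2) (hn : 1 ≤ n)
    (A B : Fin m → Set (Fin n → F))
    (hA : ∀ i, ∃ (v : Fin n → F) (V : Submodule F (Fin n → F)),
      A i = v +ᵥ (V : Set (Fin n → F)))
    (hB : ∀ i, ∃ (u : Fin n → F) (U : Submodule F (Fin n → F)),
      B i = u +ᵥ (U : Set (Fin n → F)))
    (hdisj : ∀ i, A i ∩ B i = ∅)
    (hcross : ∀ i j, i < j → (A i ∩ B j).Nonempty) :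
    m ≤ q ^ n + 1 := by
  classical
  choose vA VA hAeq using hA
  choose uB UB hBeq using hB
  have key : ∀ i, ∃ (w : Fin n → F) (c : F),
      (∀ x ∈ A i, ∑ j, w j * x j = c + 1) ∧ (∀ x ∈ B i, ∑ j, w j * x j = c) := by
    intro i
    obtain ⟨w, c, h1, h2⟩ := hegedus_sep (vA i) (uB i) (VA i) (UB i)
      (by rw [← hAeq i, ← hBeq i]; exact hdisj i)
    exact ⟨w, c, by rw [hAeq i]; exact h1, by rw [hBeq i]; exact h2⟩
  choose w c hwA hwB using key
  have hAne : ∀ i, (A i).Nonempty :=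
    fun i => ⟨vA i, by rw [hAeq i]; exact ⟨0, (VA i).zero_mem, by simp [vadd_eq_add]⟩⟩
  have hBne : ∀ i, (B i).Nonempty :=
    fun i => ⟨uB i, by rw [hBeq i]; exact ⟨0, (UB i).zero_mem, by simp [vadd_eq_add]⟩⟩
  have hw0 : ∀ i, w i ≠ 0 := by
    intro i h
    obtain ⟨x, hx⟩ := hAne i
    obtain ⟨y, hy⟩ := hBne i
    have h1 := hwA i x hx
    have h2 := hwB i y hy
    simp only [h, Pi.zero_apply, zero_mul, Finset.sum_const_zero] at h1 h2
    exact one_ne_zero (by linear_combination -h1 + h2)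
  have smulsum : ∀ (a : F) (wv x : Fin n → F),
      ∑ j, (a • wv) j * x j = a * ∑ j, wv j * x j := by
    intro a wv x
    rw [Finset.mul_sum]
    exact Finset.sum_congr rfl fun j _ => by simp [mul_assoc]
  -- no three indices with pairwise proportional functionals
  have key3 : ∀ i j k : Fin m, i < j → j < k → ∀ a b : F, a ≠ 0 → b ≠ 0 →
      w j = a • w i → w k = b • w i → False := by
    intro i j k hij hjk a b ha hb hwj hwk
    obtain ⟨x1, hx1A, hx1B⟩ := hcross i j hij
    obtain ⟨x2, hx2A, hx2B⟩ := hcross j k hjk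
    obtain ⟨x3, hx3A, hx3B⟩ := hcross i k (hij.trans hjk)
    have e1 : a * (c i + 1) = c j := by
      have h2 := hwB j x1 hx1B
      rw [hwj, smulsum, hwA i x1 hx1A] at h2
      exact h2
    have e2 : b * (c i + 1) = c k := by
      have h2 := hwB k x3 hx3B
      rw [hwk, smulsum, hwA i x3 hx3A] at h2
      exact h2
    have e3 : a * (∑ j', w i j' * x2 j') = c j + 1 := by
      have h2 := hwA j x2 hx2A
      rw [hwj, smulsum] at h2
      exact h2
    have e4 : b * (∑ j', w i j' * x2 j') = c k := by
      have h2 := hwB k x2 hx2B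
      rw [hwk, smulsum] at h2
      exact h2
    have hs : (∑ j', w i j' * x2 j') = c i + 1 := by
      have : b * (∑ j', w i j' * x2 j') = b * (c i + 1) := by rw [e4, e2]
      exact mul_left_cancel₀ hb this
    rw [hs, e1] at e3
    exact one_ne_zero (by linear_combination -e3)
  -- the injection
  set R : Fin m → Fin m → Prop := fun i j => ∃ a : F, a ≠ 0 ∧ w j = a • w i with hRdef
  let flag : Fin m → Bool := fun j => decide (∃ i, i < j ∧ R i j)
  let Θ : Fin m × Fˣ → (Fin n → F) × Bool := fun p => ((p.2 : F) • w p.1, flag p.1)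
  have main : ∀ i i' : Fin m, i < i' → ∀ a a' : Fˣ,
      (a : F) • w i = (a' : F) • w i' → flag i = flag i' → False := by
    intro i i' hlt a a' h1 h2
    have hR : R i i' := by
      refine ⟨(a' : F)⁻¹ * a, mul_ne_zero (inv_ne_zero a'.ne_zero) a.ne_zero, ?_⟩
      rw [mul_smul, h1, smul_smul, inv_mul_cancel₀ a'.ne_zero, one_smul]
    have hfi' : flag i' = true := decide_eq_true ⟨i, hlt, hR⟩
    have hfi : flag i = true := by rw [h2, hfi']
    obtain ⟨i0, hi0, a0, ha0, hw0'⟩ := of_decide_eq_true hfi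
    obtain ⟨d, hd, hwd⟩ := hR
    exact key3 i0 i i' hi0 hlt a0 (d * a0) ha0 (mul_ne_zero hd ha0)
      hw0' (by rw [hwd, hw0', smul_smul])
  have hΘ : Function.Injective Θ := by
    rintro ⟨i, a⟩ ⟨i', a'⟩ h
    simp only [Θ, Prod.mk.injEq] at h
    obtain ⟨h1, h2⟩ := h
    have hii : i = i' := by
      by_contra hne
      rcases lt_or_gt_of_ne hne with hlt | hlt
      · exact main i i' hlt a a' h1 h2
      · exact main i' i hlt a' a h1.symm h2.symm
    subst hii
    have haa : (a : F) = a' := by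
      have : ((a : F) - a') • w i = 0 := by rw [sub_smul, h1, sub_self]
      rcases smul_eq_zero.1 this with h | h
      · exact sub_eq_zero.1 h
      · exact absurd h (hw0 i)
    simp [Prod.ext_iff, Units.ext_iff, haa]
  have hcard := Fintype.card_le_of_injective Θ hΘ
  rw [Fintype.card_prod, Fintype.card_prod, Fintype.card_fin, Fintype.card_units,
    Fintype.card_fun, Fintype.card_fin, Fintype.card_bool] at hcard
  have hq3 : 3 ≤ q := by
    have h2 : 2 ≤ Fintype.card F := Fintype.one_lt_card
    omega
  rw [← hq] at hcard
  have h1 : m * 2 ≤ m * (q - 1) := Nat.mul_le_mul_left m (by omega)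
  have h2 : m * 2 ≤ q ^ n * 2 := h1.trans hcard
  have h3 : m ≤ q ^ n := Nat.le_of_mul_le_mul_right h2 (by norm_num)
  omega
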